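/- arXiv:2509.19321 — 2 statements merged into one kernel-verified Lean document; each statement's English description precedes it below -/
import Mathlib

section
/- Suppose q : ℕ → ℝ is non-increasing with q_k ≥ 0 for all k and q_0 > 0. Then for every f ∈ L¹(G_m,μ), every n ≥ 1 and every x ∈ G_m, |T_n f(x)| ≤ σ*f(x); consequently T*f(x) ≤ σ*f(x) for every x ∈ G_m. -/
open MeasureTheory Complex Finset ENNReal

noncomputable section

namespace VilenkinT

variable (m : ℕ → ℕ)

/-- The generalized powers `M_0 = 1`, `M_{k+1} = m_k M_k`. -/
def Mgen : ℕ → ℕ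
  | 0 => 1
  | k + 1 => m k * Mgen k

/-- The Vilenkin group (as a measurable space of coordinate sequences). -/
abbrev G := ∀ k : ℕ, Fin (m k)

/-- The `j`-th digit of `n` in the generalized number system based on `m`. -/
def digit (n j : ℕ) : ℕ := n / Mgen m j % m j

/-- The Vilenkin system `ψ_n(x) = ∏_k exp(2πi n_k x_k / m_k)`. -/
def psi (n : ℕ) (x : G m) : ℂ :=
  ∏' k : ℕ, Complex.exp (2 * Real.pi * Complex.I * (digit m n k : ℂ) * ((x k : ℕ) : ℂ) / (m k : ℂ))

/-- Partial sums of the Vilenkin–Fourier series built from coefficients `fhat`. -/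
def partialSum (fhat : ℕ → ℂ) (n : ℕ) (x : G m) : ℂ :=
  ∑ k ∈ Finset.range n, fhat k * psi m k x

/-- `Q_n := ∑_{k=0}^{n-1} q_k`. -/
def Qsum (q : ℕ → ℝ) (n : ℕ) : ℝ := ∑ k ∈ Finset.range n, q k

/-- The `T`-means `T_n f = (1/Q_n) ∑_{k=0}^{n-1} q_k S_k f`. -/
def Tmean (q : ℕ → ℝ) (fhat : ℕ → ℂ) (n : ℕ) (x : G m) : ℂ :=
  (1 / (Qsum q n : ℂ)) * ∑ k ∈ Finset.range n, (q k : ℂ) * partialSum m fhat k x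

/-- The maximal operator `T^* f = sup_{n ≥ 1} |T_n f|` (with values in `ℝ≥0∞`). -/
def Tstar (q : ℕ → ℝ) (fhat : ℕ → ℂ) (x : G m) : ℝ≥0∞ :=
  ⨆ (n : ℕ) (_ : 1 ≤ n), ENNReal.ofReal (‖Tmean m q fhat n x‖)

/-- The weak-`L_p` norm `sup_{t>0} t μ(g > t)^{1/p}` of an `ℝ≥0∞`-valued function. -/
def weakNorm (μ : Measure (G m)) (p : ℝ) (g : G m → ℝ≥0∞) : ℝ≥0∞ :=
  ⨆ (t : ℝ) (_ : 0 < t), ENNReal.ofReal t * (μ {x | ENNReal.ofReal t < g x}) ^ (1 / p)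

/-- The weak-`L_p` norm of a complex valued function. -/
def weakNormC (μ : Measure (G m)) (p : ℝ) (g : G m → ℂ) : ℝ≥0∞ :=
  weakNorm m μ p fun x => ENNReal.ofReal (‖g x‖)

/-- `μ` is the product of the uniform probability measures on the coordinates:
it is a probability measure giving each cylinder of length `n` measure `1/M_n`. -/
def IsHaar (μ : Measure (G m)) : Prop :=
  IsProbabilityMeasure μ ∧
    ∀ (n : ℕ) (x : G m), μ {y | ∀ i < n, y i = x i} = ((Mgen m n : ℝ≥0∞))⁻¹

/-- The σ-algebra generated by the first `n` coordinates. -/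
def coordMS (n : ℕ) : MeasurableSpace (G m) :=
  MeasurableSpace.comap (fun x (i : Fin n) => x i) inferInstance

/-- `f = (f^{(n)})` is a martingale with respect to the filtration of coordinate σ-algebras. -/
def IsVMartingale (μ : Measure (G m)) (f : ℕ → G m → ℂ) : Prop :=
  (∀ n, Integrable (f n) μ) ∧ (∀ n, StronglyMeasurable[coordMS m n] (f n)) ∧
    ∀ n, μ[f (n + 1)|coordMS m n] =ᵐ[μ] f n

/-- `fhat` is the coefficient function of the martingale `f`. -/
def IsCoeff (μ : Measure (G m)) (f : ℕ → G m → ℂ) (fhat : ℕ → ℂ) : Prop :=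
  ∀ k i, i < Mgen m k → fhat i = ∫ x, f k x * (starRingEnd ℂ) (psi m i x) ∂μ

/-- The martingale Hardy space (quasi-)norm `‖f‖_{H_p} = (∫ (sup_n |f^{(n)}|)^p dμ)^{1/p}`. -/
def HardyNorm (μ : Measure (G m)) (p : ℝ) (f : ℕ → G m → ℂ) : ℝ≥0∞ :=
  (∫⁻ x, (⨆ n, ENNReal.ofReal (‖f n x‖)) ^ p ∂μ) ^ (1 / p)

/-- The Vilenkin–Fourier coefficients of an integrable function. -/
def fourierCoeff (μ : Measure (G m)) (f : G m → ℂ) (n : ℕ) : ℂ :=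
  ∫ x, f x * (starRingEnd ℂ) (psi m n x) ∂μ

/-- The Fejér means `σ_n f = (1/n) ∑_{k=1}^n S_k f`. -/
def sigmaMean (fhat : ℕ → ℂ) (n : ℕ) (x : G m) : ℂ :=
  (1 / (n : ℂ)) * ∑ k ∈ Finset.Icc 1 n, partialSum m fhat k x

/-- The maximal Fejér operator `σ^* f = sup_{n ≥ 1} |σ_n f|`. -/
def sigmaStar (fhat : ℕ → ℂ) (x : G m) : ℝ≥0∞ :=
  ⨆ (n : ℕ) (_ : 1 ≤ n), ENNReal.ofReal (‖sigmaMean m fhat n x‖)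

/-- `l_n := ∑_{k=1}^{n-1} 1/k`. -/
def lsum (n : ℕ) : ℝ := ∑ k ∈ Finset.Icc 1 (n - 1), (1 : ℝ) / k

/-- The Riesz logarithmic means `R_n f = (1/l_n) ∑_{k=1}^{n-1} S_k f / k`. -/
def Riesz (fhat : ℕ → ℂ) (n : ℕ) (x : G m) : ℂ :=
  (1 / (lsum n : ℂ)) * ∑ k ∈ Finset.Icc 1 (n - 1), partialSum m fhat k x / (k : ℂ)

/-- The maximal Riesz operator `R^* f = sup_{n ≥ 2} |R_n f|`. -/
def RieszStar (fhat : ℕ → ℂ) (x : G m) : ℝ≥0∞ :=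
  ⨆ (n : ℕ) (_ : 2 ≤ n), ENNReal.ofReal (‖Riesz m fhat n x‖)

/-- The Cesàro numbers `A_n^α = ∏_{j=1}^n (α+j)/j`. -/
def Aces (α : ℝ) (n : ℕ) : ℝ := ∏ j ∈ Finset.Icc 1 n, (α + j) / j

/-- The means `U_n^α f = (1/A_n^α) ∑_{k=0}^{n-1} A_k^{α-1} S_k f`. -/
def Umean (α : ℝ) (fhat : ℕ → ℂ) (n : ℕ) (x : G m) : ℂ :=
  (1 / (Aces α n : ℂ)) * ∑ k ∈ Finset.range n, (Aces (α - 1) k : ℂ) * partialSum m fhat k x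

/-- The maximal operator `U^{α,*} f = sup_{n ≥ 1} |U_n^α f|`. -/
def Ustar (α : ℝ) (fhat : ℕ → ℂ) (x : G m) : ℝ≥0∞ :=
  ⨆ (n : ℕ) (_ : 1 ≤ n), ENNReal.ofReal (‖Umean m α fhat n x‖)

/-- The weights `q_0 = 1`, `q_k = k^{α-1}` generating the means `V_n^α`. -/
def qV (α : ℝ) (k : ℕ) : ℝ := if k = 0 then 1 else (k : ℝ) ^ (α - 1)

/-- The weights `q_k = max(0, log^{(β)}(k^α))` generating the means `B_n^{α,β}`. -/
def qB (α : ℝ) (β : ℕ) (k : ℕ) : ℝ := max 0 (Real.log^[β] ((k : ℝ) ^ α))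

/-- The maximal operator `B^{α,β,*} f = sup_{n : Q_n > 0} |B_n^{α,β} f|`. -/
def Bstar (α : ℝ) (β : ℕ) (fhat : ℕ → ℂ) (x : G m) : ℝ≥0∞ :=
  ⨆ (n : ℕ) (_ : 0 < Qsum (qB α β) n), ENNReal.ofReal (‖Tmean m (qB α β) fhat n x‖)

open Classical in
/-- The coefficient function `ĉ` of the counterexample martingale:
`ĉ(v) = M_{α_k}^{1/p-1}/α_k` for `M_{α_k} ≤ v < M_{α_k + 1}`, and `0` otherwise. -/
def chat (p : ℝ) (a : ℕ → ℕ) (v : ℕ) : ℝ :=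
  if h : ∃ k, Mgen m (a k) ≤ v ∧ v < Mgen m (a k + 1) then
    (Mgen m (a h.choose) : ℝ) ^ (1 / p - 1) / (a h.choose : ℝ)
  else 0


/-- Abel-type coefficient identity. -/
lemma coeffSum_eq (q : ℕ → ℝ) :
    ∀ n : ℕ, (n : ℝ) * q n + ∑ i ∈ Finset.range n, (q i - q (i + 1)) * i =
      (∑ i ∈ Finset.range (n + 1), q i) - q 0 := by
  intro n
  induction n with
  | zero => simp
  | succ n ih =>
    rw [Finset.sum_range_succ, Finset.sum_range_succ (f := q)]
    push_cast
    linear_combination ih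

/-- For a non-increasing nonnegative weight sequence `q` with `q 0 > 0` and any
integrable `f`, one has `|T_n f| ≤ σ^* f` pointwise for all `n ≥ 1`, hence `T^* f ≤ σ^* f`. -/
theorem Tmean_le_sigmaStar_nonincreasing
    (m : ℕ → ℕ) (hm : ∀ k, 2 ≤ m k) (hbdd : ∃ Λ : ℕ, ∀ k, m k ≤ Λ)
    (μ : Measure (G m)) (hμ : IsHaar m μ)
    (q : ℕ → ℝ) (hq : ∀ k, 0 ≤ q k) (hq0 : 0 < q 0) (hmono : Antitone q)
    (f : G m → ℂ) (hf : Integrable f μ) :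
    (∀ n : ℕ, 1 ≤ n → ∀ x : G m,
        ENNReal.ofReal (‖Tmean m q (fourierCoeff m μ f) n x‖) ≤
          sigmaStar m (fourierCoeff m μ f) x) ∧
      ∀ x : G m, Tstar m q (fourierCoeff m μ f) x ≤ sigmaStar m (fourierCoeff m μ f) x := by

  set fhat := fourierCoeff m μ f with hfhat
  have H : ∀ n : ℕ, 1 ≤ n → ∀ x : G m,
      ENNReal.ofReal (‖Tmean m q fhat n x‖) ≤ sigmaStar m fhat x := by
    intro n hn x
    set A := sigmaStar m fhat x with hA
    by_cases hAtop : A = ⊤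
    · rw [hAtop]; exact le_top
    set s := A.toReal with hs
    have hs0 : 0 ≤ s := ENNReal.toReal_nonneg
    have hσ : ∀ k, 1 ≤ k → ‖sigmaMean m fhat k x‖ ≤ s := by
      intro k hk
      have h1 : ENNReal.ofReal (‖sigmaMean m fhat k x‖) ≤ A :=
        le_iSup₂ (f := fun (n : ℕ) (_ : 1 ≤ n) =>
          ENNReal.ofReal (‖sigmaMean m fhat n x‖)) k hk
      exact (ENNReal.ofReal_le_iff_le_toReal hAtop).mp h1
    set S : ℕ → ℂ := fun k => partialSum m fhat k x with hS
    have hS0 : S 0 = 0 := by simp [hS, partialSum]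
    -- bound on the partial sums of S
    have hG : ∀ k : ℕ, ‖∑ j ∈ Finset.range (k + 1), S j‖ ≤ k * s := by
      intro k
      rcases Nat.eq_zero_or_pos k with hk | hk
      · simp [hk, hS0]
      · have hIcc : ∑ j ∈ Finset.range (k + 1), S j = ∑ j ∈ Finset.Icc 1 k, S j := by
          rw [Finset.sum_range_succ' S k, hS0, add_zero, ← Finset.Ico_add_one_right_eq_Icc,
            Finset.sum_Ico_eq_sum_range]
          try simp only [Nat.add_sub_cancel]
          exact Finset.sum_congr rfl fun i _ => by rw [add_comm]
        have hkC : (k : ℂ) ≠ 0 := Nat.cast_ne_zero.mpr hk.ne'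
        have hSig : ∑ j ∈ Finset.Icc 1 k, S j = (k : ℂ) * sigmaMean m fhat k x := by
          rw [sigmaMean]
          field_simp
          rfl
        rw [hIcc, hSig, norm_mul]
        simp only [Complex.norm_natCast]
        exact mul_le_mul_of_nonneg_left (hσ k hk) (Nat.cast_nonneg k)
    -- Q_n > 0
    have hQpos : 0 < Qsum q n := by
      have h1 : q 0 ≤ Qsum q n := by
        rw [Qsum]
        exact Finset.single_le_sum (fun i _ => hq i) (Finset.mem_range.mpr hn)
      linarith
    -- Abel summation
    have habel : ∑ k ∈ Finset.range n, (q k : ℂ) * S k =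
        q (n - 1) • (∑ j ∈ Finset.range n, S j) -
          ∑ i ∈ Finset.range (n - 1), (q (i + 1) - q i) • (∑ j ∈ Finset.range (i + 1), S j) := by
      have := Finset.sum_range_by_parts q S n
      simpa [Complex.real_smul] using this
    -- bound the numerator
    obtain ⟨p, hp⟩ : ∃ p, n = p + 1 := ⟨n - 1, (Nat.succ_pred_eq_of_pos hn).symm⟩
    have hnum : ‖∑ k ∈ Finset.range n, (q k : ℂ) * S k‖ ≤ Qsum q n * s := by
      rw [habel]
      have hb1 : ‖q (n - 1) • (∑ j ∈ Finset.range n, S j)‖ ≤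
          q (n - 1) * ((n - 1 : ℕ) * s) := by
        rw [Complex.real_smul, norm_mul, Complex.norm_real, Real.norm_eq_abs,
          _root_.abs_of_nonneg (hq (n - 1))]
        refine mul_le_mul_of_nonneg_left ?_ (hq (n - 1))
        have := hG (n - 1)
        rwa [Nat.sub_add_cancel hn] at this
      have hb2 : ‖∑ i ∈ Finset.range (n - 1),
            (q (i + 1) - q i) • (∑ j ∈ Finset.range (i + 1), S j)‖ ≤
          ∑ i ∈ Finset.range (n - 1), (q i - q (i + 1)) * (i * s) := by
        refine (norm_sum_le _ _).trans ?_
        refine Finset.sum_le_sum fun i _ => ?_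
        rw [Complex.real_smul, norm_mul, Complex.norm_real, Real.norm_eq_abs, abs_sub_comm,
          _root_.abs_of_nonneg (sub_nonneg.mpr (hmono (Nat.le_succ i)))]
        exact mul_le_mul_of_nonneg_left (hG i)
          (sub_nonneg.mpr (hmono (Nat.le_succ i)))
      calc ‖_‖ ≤ ‖q (n - 1) • (∑ j ∈ Finset.range n, S j)‖ +
            ‖∑ i ∈ Finset.range (n - 1),
              (q (i + 1) - q i) • (∑ j ∈ Finset.range (i + 1), S j)‖ := by
              exact (norm_sub_le _ _)
        _ ≤ q (n - 1) * ((n - 1 : ℕ) * s) +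
              ∑ i ∈ Finset.range (n - 1), (q i - q (i + 1)) * (i * s) :=
            add_le_add hb1 hb2
        _ = ((n - 1 : ℕ) * q (n - 1) +
              ∑ i ∈ Finset.range (n - 1), (q i - q (i + 1)) * i) * s := by
            rw [add_mul, Finset.sum_mul]
            congr 1
            · ring
            · exact Finset.sum_congr rfl fun i _ => by ring
        _ = ((∑ i ∈ Finset.range n, q i) - q 0) * s := by
            rw [hp]
            try simp only [Nat.add_sub_cancel]
            rw [coeffSum_eq q p]
        _ ≤ Qsum q n * s := by
            rw [Qsum]
            have : (∑ i ∈ Finset.range n, q i) - q 0 ≤ ∑ i ∈ Finset.range n, q i := by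
              linarith
            exact mul_le_mul_of_nonneg_right this hs0
    have key : ‖Tmean m q fhat n x‖ ≤ s := by
      rw [Tmean, norm_mul, norm_div, norm_one]
      rw [Complex.norm_real, Real.norm_eq_abs, abs_of_pos hQpos]
      rw [div_mul_eq_mul_div, one_mul, div_le_iff₀ hQpos]
      calc ‖∑ k ∈ Finset.range n, (q k : ℂ) * partialSum m fhat k x‖
          ≤ Qsum q n * s := hnum
        _ = s * Qsum q n := by ring
    calc ENNReal.ofReal (‖Tmean m q fhat n x‖) ≤ ENNReal.ofReal s :=
          ENNReal.ofReal_le_ofReal key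
      _ = A := ENNReal.ofReal_toReal hAtop
  exact ⟨H, fun x => iSup₂_le fun n hn => H n hn x⟩


end VilenkinT
end
end

section
/- Let α > 0 and β ∈ ℕ with β ≥ 1, and let q_k := max(0, log^{(β)}(k^α)) and Q_n := ∑_{k=0}^{n-1} q_k. Then (i) there exists N such that for all n ≥ N, (n/2)·log^{(β)}((n/2)^α) ≤ Q_n ≤ n·log^{(β)}(n^α); (ii) there exists C > 0 such that n·q_{n-1} ≤ C·Q_n for all n ≥ 1 (in particular q_{n-1}/Q_n = O(1/n)). -/
open MeasureTheory Complex Finset ENNReal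

noncomputable section

namespace VilenkinT

variable (m : ℕ → ℕ)

/-- Tower of exponentials: `Tow 0 = 1`, `Tow (j+1) = exp (Tow j)`. -/
private def Tow : ℕ → ℝ
  | 0 => 1
  | j + 1 => Real.exp (Tow j)

private lemma one_le_Tow (j : ℕ) : 1 ≤ Tow j := by
  induction j with
  | zero => simp [Tow]
  | succ j ih =>
    have h := Real.add_one_le_exp (Tow j)
    simp only [Tow]
    linarith

private lemma Tow_le_succ (j : ℕ) : Tow j ≤ Tow (j + 1) := by
  have h := Real.add_one_le_exp (Tow j)
  simp only [Tow]
  linarith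

private lemma one_le_iterLog (j : ℕ) {x : ℝ} (hx : Tow j ≤ x) : 1 ≤ Real.log^[j] x := by
  induction j generalizing x with
  | zero => simpa [Tow] using hx
  | succ j ih =>
    simp only [Tow] at hx
    have hx0 : 0 < x := lt_of_lt_of_le (Real.exp_pos _) hx
    rw [Function.iterate_succ_apply]
    exact ih ((Real.le_log_iff_exp_le hx0).mpr hx)

private lemma iterLog_mono (j : ℕ) {x y : ℝ} (hx : Tow j ≤ x) (hxy : x ≤ y) :
    Real.log^[j] x ≤ Real.log^[j] y := by
  induction j generalizing x y with
  | zero => simpa using hxy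
  | succ j ih =>
    simp only [Tow] at hx
    have hx0 : 0 < x := lt_of_lt_of_le (Real.exp_pos _) hx
    rw [Function.iterate_succ_apply, Function.iterate_succ_apply]
    exact ih ((Real.le_log_iff_exp_le hx0).mpr hx) (Real.log_le_log hx0 hxy)

private lemma log_sub_le {a b : ℝ} (hb : 1 ≤ b) (hba : b ≤ a) :
    Real.log a - Real.log b ≤ a - b := by
  have hb0 : 0 < b := by linarith
  have ha0 : 0 < a := by linarith
  rw [← Real.log_div ha0.ne' hb0.ne']
  have h2 : Real.log (a / b) ≤ a / b - 1 := Real.log_le_sub_one_of_pos (div_pos ha0 hb0)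
  have h3 : a / b - 1 = (a - b) / b := by field_simp
  have h4 : (a - b) / b ≤ a - b := div_le_self (by linarith) hb
  linarith

private lemma iterLog_contract (j : ℕ) {x y : ℝ} (hy : Tow j ≤ y) (hxy : y ≤ x) :
    Real.log^[j + 1] x - Real.log^[j + 1] y ≤ Real.log x - Real.log y := by
  induction j generalizing x y with
  | zero => simp
  | succ j ih =>
    have hy' : Tow j ≤ y := le_trans (Tow_le_succ j) hy
    have hb : 1 ≤ Real.log^[j + 1] y := one_le_iterLog (j + 1) hy
    have hba : Real.log^[j + 1] y ≤ Real.log^[j + 1] x := iterLog_mono (j + 1) hy hxy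
    have hx2 : Real.log^[j + 1 + 1] x = Real.log (Real.log^[j + 1] x) :=
      Function.iterate_succ_apply' _ _ _
    have hy2 : Real.log^[j + 1 + 1] y = Real.log (Real.log^[j + 1] y) :=
      Function.iterate_succ_apply' _ _ _
    rw [hx2, hy2]
    calc Real.log (Real.log^[j + 1] x) - Real.log (Real.log^[j + 1] y)
        ≤ Real.log^[j + 1] x - Real.log^[j + 1] y := log_sub_le hb hba
      _ ≤ Real.log x - Real.log y := ih hy' hxy

private lemma iterLog_tendsto (j : ℕ) :
    Filter.Tendsto (fun x => Real.log^[j] x) Filter.atTop Filter.atTop := by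
  induction j with
  | zero => exact Filter.tendsto_id
  | succ j ih =>
    have h : (fun x => Real.log^[j + 1] x) = (fun x => Real.log^[j] x) ∘ Real.log := by
      funext x
      exact Function.iterate_succ_apply _ _ _
    rw [h]
    exact ih.comp Real.tendsto_log_atTop

set_option maxHeartbeats 1600000 in
/-- Estimates for the weights `q_k = max(0, log^{(β)}(k^α))`:
`(n/2) log^{(β)}((n/2)^α) ≤ Q_n ≤ n log^{(β)}(n^α)` for all large `n`, and
`n q_{n-1} ≤ C Q_n` for all `n ≥ 1` (i.e. `q_{n-1}/Q_n = O(1/n)`). -/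
theorem qB_estimates (α : ℝ) (hα : 0 < α) (β : ℕ) (hβ : 1 ≤ β) :
    (∃ N : ℕ, ∀ n : ℕ, N ≤ n →
        (n : ℝ) / 2 * Real.log^[β] (((n : ℝ) / 2) ^ α) ≤ Qsum (qB α β) n ∧
          Qsum (qB α β) n ≤ (n : ℝ) * Real.log^[β] ((n : ℝ) ^ α)) ∧
      ∃ C : ℝ, 0 < C ∧ ∀ n : ℕ, 1 ≤ n → (n : ℝ) * qB α β (n - 1) ≤ C * Qsum (qB α β) n := by
  obtain ⟨b, rfl⟩ : ∃ b, β = b + 1 := ⟨β - 1, (Nat.succ_pred_eq_of_pos hβ).symm⟩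
  -- a threshold `K0` beyond which the weights are genuine iterated logarithms
  obtain ⟨K0, hK01, hK0S⟩ : ∃ K0 : ℕ, 1 ≤ K0 ∧ Tow (b + 1) ≤ (K0 : ℝ) ^ α := by
    have h := ((tendsto_rpow_atTop hα).comp
        (tendsto_natCast_atTop_atTop (R := ℝ))).eventually_ge_atTop (Tow (b + 1))
    obtain ⟨K, hK⟩ := (h.and (Filter.eventually_ge_atTop 1)).exists
    exact ⟨K, hK.2, hK.1⟩
  have hqk : ∀ k : ℕ, K0 ≤ k → Tow (b + 1) ≤ (k : ℝ) ^ α ∧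
      qB α (b + 1) k = Real.log^[b + 1] ((k : ℝ) ^ α) := by
    intro k hk
    have hS : Tow (b + 1) ≤ (k : ℝ) ^ α :=
      le_trans hK0S (Real.rpow_le_rpow (Nat.cast_nonneg _)
        (by exact_mod_cast hk) hα.le)
    refine ⟨hS, ?_⟩
    have h1 : (1 : ℝ) ≤ Real.log^[b + 1] ((k : ℝ) ^ α) := one_le_iterLog _ hS
    unfold qB
    exact max_eq_right (by linarith)
  -- the eventual conditions
  have tcast : Filter.Tendsto (fun n : ℕ => (n : ℝ)) Filter.atTop Filter.atTop :=
    tendsto_natCast_atTop_atTop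
  have t1 : Filter.Tendsto (fun n : ℕ => ((n : ℝ) - 1) / 2) Filter.atTop Filter.atTop := by
    have h := (Filter.tendsto_atTop_add_const_right Filter.atTop (-1 : ℝ) tcast).atTop_div_const
      (by norm_num : (0 : ℝ) < 2)
    simpa [sub_eq_add_neg] using h
  have t2 : Filter.Tendsto (fun n : ℕ => (n : ℝ) / 2) Filter.atTop Filter.atTop :=
    tcast.atTop_div_const (by norm_num)
  have comp_t : ∀ g : ℕ → ℝ, Filter.Tendsto g Filter.atTop Filter.atTop →
      Filter.Tendsto (fun n => Real.log^[b + 1] ((g n) ^ α)) Filter.atTop Filter.atTop :=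
    fun g hg => (iterLog_tendsto (b + 1)).comp ((tendsto_rpow_atTop hα).comp hg)
  have hev : ∀ᶠ n : ℕ in Filter.atTop,
      (Tow (b + 1) ≤ (((n : ℝ) - 1) / 2) ^ α ∧
        3 * α ≤ Real.log^[b + 1] (((n : ℝ) / 2) ^ α)) ∧
      ((∑ k ∈ Finset.range K0, qB α (b + 1) k) ≤ Real.log^[b + 1] ((n : ℝ) ^ α) ∧
        2 * K0 + 2 ≤ n ∧ 3 ≤ n) := by
    have e1 := ((tendsto_rpow_atTop hα).comp t1).eventually_ge_atTop (Tow (b + 1))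
    have e2 := (comp_t _ t2).eventually_ge_atTop (3 * α)
    have e3 := (comp_t _ tcast).eventually_ge_atTop (∑ k ∈ Finset.range K0, qB α (b + 1) k)
    have e4 := Filter.eventually_ge_atTop (2 * K0 + 2)
    have e5 := Filter.eventually_ge_atTop 3
    filter_upwards [e1, e2, e3, e4, e5] with n h1 h2 h3 h4 h5
    exact ⟨⟨h1, h2⟩, h3, h4, h5⟩
  obtain ⟨N, hN⟩ := Filter.eventually_atTop.mp hev
  have key : ∀ n : ℕ, N ≤ n →
      (n : ℝ) / 2 * Real.log^[b + 1] (((n : ℝ) / 2) ^ α) ≤ Qsum (qB α (b + 1)) n ∧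
        Qsum (qB α (b + 1)) n ≤ (n : ℝ) * Real.log^[b + 1] ((n : ℝ) ^ α) := by
    intro n hn
    obtain ⟨⟨h1, h2⟩, h3, h4, h5⟩ := hN n hn
    have hr3 : (3 : ℝ) ≤ (n : ℝ) := by exact_mod_cast h5
    constructor
    · -- lower bound
      set k0 := n / 2 with hk0
      have hk0K : K0 ≤ k0 := by omega
      have hk0n : k0 ≤ n := Nat.div_le_self _ _
      have hk0r1 : ((n : ℝ) - 1) / 2 ≤ (k0 : ℝ) := by
        have h' : (n : ℝ) ≤ 2 * (k0 : ℝ) + 1 := by exact_mod_cast (by omega : n ≤ 2 * k0 + 1)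
        linarith
      have hk0r2 : (k0 : ℝ) ≤ (n : ℝ) / 2 := by
        have h' : 2 * (k0 : ℝ) ≤ (n : ℝ) := by exact_mod_cast (by omega : 2 * k0 ≤ n)
        linarith
      obtain ⟨hSk0', hqeq⟩ := hqk k0 hk0K
      have main : (n : ℝ) / 2 * Real.log^[b + 1] (((n : ℝ) / 2) ^ α)
          ≤ ((n : ℝ) - (k0 : ℝ)) * Real.log^[b + 1] ((k0 : ℝ) ^ α) := by
        rcases Nat.even_or_odd n with he | ho
        · obtain ⟨m, hm⟩ := he
          have hk0m : (k0 : ℝ) = (n : ℝ) / 2 := by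
            have h' : (2 * k0 : ℝ) = (n : ℝ) := by exact_mod_cast (by omega : 2 * k0 = n)
            linarith
          rw [hk0m]
          have h' : (n : ℝ) - (n : ℝ) / 2 = (n : ℝ) / 2 := by ring
          rw [h']
        · obtain ⟨m, hm⟩ := ho
          have hk0m : (k0 : ℝ) = ((n : ℝ) - 1) / 2 := by
            have h' : (2 * k0 + 1 : ℝ) = (n : ℝ) := by exact_mod_cast (by omega : 2 * k0 + 1 = n)
            linarith
          rw [hk0m]
          set L := Real.log^[b + 1] (((n : ℝ) / 2) ^ α) with hLdef
          set M := Real.log^[b + 1] ((((n : ℝ) - 1) / 2) ^ α) with hMdef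
          have hxy : (((n : ℝ) - 1) / 2) ^ α ≤ ((n : ℝ) / 2) ^ α :=
            Real.rpow_le_rpow (by linarith) (by linarith) hα.le
          have hMLle : M ≤ L := iterLog_mono (b + 1) h1 hxy
          have hM1 : (1 : ℝ) ≤ M := one_le_iterLog _ h1
          have hcon := iterLog_contract b (le_trans (Tow_le_succ b) h1) hxy
          have e1 : Real.log (((n : ℝ) / 2) ^ α) = α * Real.log ((n : ℝ) / 2) :=
            Real.log_rpow (by linarith) α
          have e2 : Real.log ((((n : ℝ) - 1) / 2) ^ α) = α * Real.log (((n : ℝ) - 1) / 2) :=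
            Real.log_rpow (by linarith) α
          rw [e1, e2] at hcon
          have hdlog : Real.log ((n : ℝ) / 2) - Real.log (((n : ℝ) - 1) / 2)
              ≤ 1 / ((n : ℝ) - 1) := by
            rw [← Real.log_div (ne_of_gt (by linarith : (0 : ℝ) < (n : ℝ) / 2))
              (ne_of_gt (by linarith : (0 : ℝ) < ((n : ℝ) - 1) / 2))]
            have hpos : 0 < ((n : ℝ) / 2) / (((n : ℝ) - 1) / 2) :=
              div_pos (by linarith) (by linarith)
            have h6 := Real.log_le_sub_one_of_pos hpos
            have hne : (n : ℝ) - 1 ≠ 0 := by linarith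
            have h7 : ((n : ℝ) / 2) / (((n : ℝ) - 1) / 2) - 1 = 1 / ((n : ℝ) - 1) := by
              rw [div_div_div_cancel_right₀]
              · field_simp; ring
              · norm_num
            linarith
          have hmul := mul_le_mul_of_nonneg_left hdlog hα.le
          have hring : α * (Real.log ((n : ℝ) / 2) - Real.log (((n : ℝ) - 1) / 2))
              = α * Real.log ((n : ℝ) / 2) - α * Real.log (((n : ℝ) - 1) / 2) := by ring
          have hr1 : (0 : ℝ) < (n : ℝ) - 1 := by linarith
          have hLM' : ((n : ℝ) - 1) * (L - M) ≤ α := by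
            have h8 : L - M ≤ α * (1 / ((n : ℝ) - 1)) := by linarith
            have h9 := mul_le_mul_of_nonneg_left h8 hr1.le
            have h10 : ((n : ℝ) - 1) * (α * (1 / ((n : ℝ) - 1))) = α := by
              field_simp
            linarith
          nlinarith [mul_nonneg (sub_nonneg.mpr hMLle) (by linarith : (0 : ℝ) ≤ (n : ℝ) - 3)]
      have hsum1 : ∑ k ∈ Finset.Ico k0 n, qB α (b + 1) k ≤ Qsum (qB α (b + 1)) n := by
        rw [Qsum, Finset.range_eq_Ico]
        exact Finset.sum_le_sum_of_subset_of_nonneg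
          (Finset.Ico_subset_Ico (Nat.zero_le _) le_rfl) (fun k _ _ => le_max_left _ _)
      have hsum2 : ((n : ℝ) - (k0 : ℝ)) * Real.log^[b + 1] ((k0 : ℝ) ^ α)
          ≤ ∑ k ∈ Finset.Ico k0 n, qB α (b + 1) k := by
        have hb' : ∀ k ∈ Finset.Ico k0 n,
            Real.log^[b + 1] ((k0 : ℝ) ^ α) ≤ qB α (b + 1) k := by
          intro k hk
          obtain ⟨hk1, _⟩ := Finset.mem_Ico.mp hk
          rw [(hqk k (le_trans hk0K hk1)).2]
          exact iterLog_mono (b + 1) hSk0'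
            (Real.rpow_le_rpow (Nat.cast_nonneg _) (by exact_mod_cast hk1) hα.le)
        have h' := Finset.card_nsmul_le_sum (Finset.Ico k0 n) (qB α (b + 1)) _ hb'
        rw [Nat.card_Ico, nsmul_eq_mul, Nat.cast_sub hk0n] at h'
        exact h'
      linarith
    · -- upper bound
      have hKn : K0 ≤ n := by omega
      have hL1 : (1 : ℝ) ≤ Real.log^[b + 1] ((n : ℝ) ^ α) := one_le_iterLog _ (hqk n hKn).1
      have hsplit : Qsum (qB α (b + 1)) n
          = (∑ k ∈ Finset.range K0, qB α (b + 1) k) + ∑ k ∈ Finset.Ico K0 n, qB α (b + 1) k := by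
        rw [Qsum]
        simp only [Finset.range_eq_Ico]
        exact (Finset.sum_Ico_consecutive _ (Nat.zero_le K0) hKn).symm
      have hIco : ∑ k ∈ Finset.Ico K0 n, qB α (b + 1) k
          ≤ ((n : ℝ) - (K0 : ℝ)) * Real.log^[b + 1] ((n : ℝ) ^ α) := by
        have hb' : ∀ k ∈ Finset.Ico K0 n,
            qB α (b + 1) k ≤ Real.log^[b + 1] ((n : ℝ) ^ α) := by
          intro k hk
          obtain ⟨hk1, hk2⟩ := Finset.mem_Ico.mp hk
          rw [(hqk k hk1).2]
          exact iterLog_mono (b + 1) (hqk k hk1).1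
            (Real.rpow_le_rpow (Nat.cast_nonneg _) (by exact_mod_cast hk2.le) hα.le)
        have h' := Finset.sum_le_card_nsmul (Finset.Ico K0 n) (qB α (b + 1)) _ hb'
        rw [Nat.card_Ico, nsmul_eq_mul, Nat.cast_sub hKn] at h'
        exact h'
      have hBK : (∑ k ∈ Finset.range K0, qB α (b + 1) k)
          ≤ (K0 : ℝ) * Real.log^[b + 1] ((n : ℝ) ^ α) := by
        have hK1 : (1 : ℝ) ≤ (K0 : ℝ) := by exact_mod_cast hK01
        calc (∑ k ∈ Finset.range K0, qB α (b + 1) k)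
            ≤ Real.log^[b + 1] ((n : ℝ) ^ α) := h3
          _ ≤ (K0 : ℝ) * Real.log^[b + 1] ((n : ℝ) ^ α) :=
            le_mul_of_one_le_left (by linarith) hK1
      rw [hsplit]
      nlinarith [hIco, hBK]
  refine ⟨⟨N, key⟩, max (N : ℝ) 4, lt_of_lt_of_le (by norm_num) (le_max_right _ _), ?_⟩
  intro n hn1
  have hq0 : (0 : ℝ) ≤ qB α (b + 1) (n - 1) := le_max_left _ _
  have hQ0 : (0 : ℝ) ≤ Qsum (qB α (b + 1)) n :=
    Finset.sum_nonneg fun k _ => le_max_left _ _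
  rcases le_or_gt N n with hNn | hnN
  · obtain ⟨⟨h1, h2⟩, h3, h4, h5⟩ := hN n hNn
    obtain ⟨hlow, _⟩ := key n hNn
    have hr3 : (3 : ℝ) ≤ (n : ℝ) := by exact_mod_cast h5
    have hn1K : K0 ≤ n - 1 := by omega
    have hcast : ((n - 1 : ℕ) : ℝ) = (n : ℝ) - 1 := by
      rw [Nat.cast_sub (by omega : 1 ≤ n)]
      norm_num
    have hqeq : qB α (b + 1) (n - 1) = Real.log^[b + 1] (((n : ℝ) - 1) ^ α) := by
      rw [(hqk (n - 1) hn1K).2, hcast]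
    have hyS : Tow (b + 1) ≤ ((n : ℝ) / 2) ^ α :=
      le_trans h1 (Real.rpow_le_rpow (by linarith) (by linarith) hα.le)
    have hxy : ((n : ℝ) / 2) ^ α ≤ ((n : ℝ) - 1) ^ α :=
      Real.rpow_le_rpow (by linarith) (by linarith) hα.le
    have hcon := iterLog_contract b (le_trans (Tow_le_succ b) hyS) hxy
    have e1 : Real.log (((n : ℝ) - 1) ^ α) = α * Real.log ((n : ℝ) - 1) :=
      Real.log_rpow (by linarith) α
    have e2 : Real.log (((n : ℝ) / 2) ^ α) = α * Real.log ((n : ℝ) / 2) :=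
      Real.log_rpow (by linarith) α
    rw [e1, e2] at hcon
    have h8 : Real.log ((n : ℝ) - 1) ≤ Real.log (n : ℝ) :=
      Real.log_le_log (by linarith) (by linarith)
    have h9 : Real.log ((n : ℝ) / 2) = Real.log (n : ℝ) - Real.log 2 :=
      Real.log_div (by linarith) (by norm_num)
    have hlog2 : Real.log 2 ≤ 1 := by
      have h' := Real.log_le_sub_one_of_pos (show (0 : ℝ) < 2 by norm_num)
      linarith
    have hdiff : Real.log ((n : ℝ) - 1) - Real.log ((n : ℝ) / 2) ≤ 1 := by
      rw [h9]
      linarith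
    have hmul := mul_le_mul_of_nonneg_left hdiff hα.le
    have hq2L : qB α (b + 1) (n - 1) ≤ Real.log^[b + 1] (((n : ℝ) / 2) ^ α) + α := by
      rw [hqeq]
      nlinarith [hmul, hcon]
    have hq2L' : qB α (b + 1) (n - 1) ≤ 2 * Real.log^[b + 1] (((n : ℝ) / 2) ^ α) := by
      linarith
    have h10 : (n : ℝ) * qB α (b + 1) (n - 1)
        ≤ (n : ℝ) * (2 * Real.log^[b + 1] (((n : ℝ) / 2) ^ α)) :=
      mul_le_mul_of_nonneg_left hq2L' (by linarith)
    have hfin : (n : ℝ) * qB α (b + 1) (n - 1) ≤ 4 * Qsum (qB α (b + 1)) n := by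
      nlinarith [hlow]
    calc (n : ℝ) * qB α (b + 1) (n - 1) ≤ 4 * Qsum (qB α (b + 1)) n := hfin
      _ ≤ max (N : ℝ) 4 * Qsum (qB α (b + 1)) n :=
        mul_le_mul_of_nonneg_right (le_max_right _ _) hQ0
  · have hmem : n - 1 ∈ Finset.range n := Finset.mem_range.mpr (by omega)
    have hqQ : qB α (b + 1) (n - 1) ≤ Qsum (qB α (b + 1)) n :=
      Finset.single_le_sum (f := fun k => qB α (b + 1) k) (fun k _ => le_max_left _ _) hmem
    have hnN' : (n : ℝ) ≤ (N : ℝ) := by exact_mod_cast hnN.le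
    calc (n : ℝ) * qB α (b + 1) (n - 1) ≤ (N : ℝ) * Qsum (qB α (b + 1)) n :=
        mul_le_mul hnN' hqQ hq0 (Nat.cast_nonneg _)
      _ ≤ max (N : ℝ) 4 * Qsum (qB α (b + 1)) n :=
        mul_le_mul_of_nonneg_right (le_max_left _ _) hQ0


end VilenkinT
end
end
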